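/- The syntactic universality predicate is sound: for every contract C, if unv(C) = true then L(C) = A*, the set of all paths over the property alphabet A. -/
import Mathlib


/-- Contracts over a property alphabet `A`: extended regular expressions with
intersection, with a distinguished universe literal `?` denoting all of `A`
and regular-expression literals modeled as sets of properties. -/
inductive Contract (A : Type*) where
  | emptyset : Contract A
  | eps : Contract A
  | univLit : Contract A
  | lit : Set A → Contract A
  | star : Contract A → Contract A
  | union : Contract A → Contract A → Contract A
  | inter : Contract A → Contract A → Contract A
  | concat : Contract A → Contract A → Contract A

namespace Contract

variable {A : Type*}

/-- The language of a contract. -/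
def lang : Contract A → Set (List A)
  | emptyset => ∅
  | eps => {[]}
  | univLit => {w | ∃ p, w = [p]}
  | lit s => {w | ∃ p ∈ s, w = [p]}
  | star c => {w | ∃ ws : List (List A), (∀ x ∈ ws, x ∈ lang c) ∧ w = ws.flatten}
  | union c c' => lang c ∪ lang c'
  | inter c c' => lang c ∩ lang c'
  | concat c c' => {w | ∃ u ∈ lang c, ∃ v ∈ lang c', w = u ++ v}

/-- The syntactic indifference predicate `ind`: sound for `L(C) = A`. -/
def ind : Contract A → Prop
  | emptyset => False
  | eps => False
  | univLit => True
  | lit _ => False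
  | star c => ind c
  | union c c' => ind c ∨ ind c'
  | inter c c' => ind c ∧ ind c'
  | concat c c' => (c = eps ∧ ind c') ∨ (ind c ∧ c' = eps)

/-- The syntactic universality predicate `unv`. -/
def unv : Contract A → Prop
  | emptyset => False
  | eps => False
  | univLit => False
  | lit _ => False
  | star c => unv c ∨ ind c
  | union c c' => unv c ∨ unv c'
  | inter c c' => unv c ∧ unv c'
  | concat c c' => (c = eps ∧ unv c') ∨ (unv c ∧ c' = eps) ∨ (unv c ∧ unv c')

end Contract

lemma ind_singleton {A : Type*} (C : Contract A) (h : Contract.ind C) :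
    ∀ p : A, [p] ∈ Contract.lang C := by
  induction C with
  | emptyset => exact h.elim
  | eps => exact h.elim
  | univLit => intro p; exact ⟨p, rfl⟩
  | lit s => exact h.elim
  | star c ih =>
      intro p
      exact ⟨[[p]], by intro x hx; simp at hx; subst hx; exact ih h p, by simp⟩
  | union c c' ih ih' =>
      intro p
      rcases h with h | h
      · exact Or.inl (ih h p)
      · exact Or.inr (ih' h p)
  | inter c c' ih ih' =>
      intro p
      exact ⟨ih h.1 p, ih' h.2 p⟩
  | concat c c' ih ih' =>
      intro p
      rcases h with ⟨rfl, h⟩ | ⟨h, rfl⟩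
      · exact ⟨[], rfl, [p], ih' h p, rfl⟩
      · exact ⟨[p], ih h p, [], rfl, by simp⟩

/-- Soundness of the syntactic universality predicate: if `unv(C)` holds, then
the language of `C` is the set of all paths over the property alphabet `A`. -/
theorem unv_sound {A : Type*} (C : Contract A) (h : Contract.unv C) :
    Contract.lang C = (Set.univ : Set (List A)) := by
  induction C with
  | emptyset => exact h.elim
  | eps => exact h.elim
  | univLit => exact h.elim
  | lit s => exact h.elim
  | star c ih =>
      apply Set.eq_univ_of_forall
      intro w
      rcases h with h | h
      · exact ⟨[w], by intro x hx; simp at hx; subst hx; rw [ih h]; trivial, by simp⟩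
      · refine ⟨w.map (fun p => [p]), ?_, ?_⟩
        · intro x hx
          simp at hx
          obtain ⟨p, _, rfl⟩ := hx
          exact ind_singleton c h p
        · induction w with
          | nil => simp
          | cons a t iht => simpa using iht
  | union c c' ih ih' =>
      rcases h with h | h
      · simp [Contract.lang, ih h]
      · simp [Contract.lang, ih' h]
  | inter c c' ih ih' =>
      simp [Contract.lang, ih h.1, ih' h.2]
  | concat c c' ih ih' =>
      apply Set.eq_univ_of_forall
      intro w
      rcases h with ⟨rfl, h⟩ | ⟨h, rfl⟩ | ⟨h, h'⟩
      · exact ⟨[], rfl, w, by rw [ih' h]; trivial, rfl⟩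
      · exact ⟨w, by rw [ih h]; trivial, [], rfl, by simp⟩
      · exact ⟨w, by rw [ih h]; trivial, [], by rw [ih' h']; trivial, by simp⟩
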